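/- arXiv:1910.04063 — 4 statements merged into one kernel-verified Lean document; each statement's English description precedes it below -/
import Mathlib

section
/- Let S be a finite set and f : S → ℕ. The multinomial coefficient Nat.multinomial S f = (∑_{i∈S} f i)! / ∏_{i∈S} (f i)! is odd if and only if the values f i are pairwise bitwise disjoint in binary, i.e. Nat.land (f i) (f j) = 0 for all i ≠ j in S. (This is the criterion for the coefficient β_{R,S,X} in Milnor's multiplication formula for the mod 2 Steenrod algebra to be nonzero: the coefficient is nonzero if and only if the diagonal decomposition of each t_k is bitwise disjoint.) -/
open Finset

private lemma aux_eq_zero_iff_testBit (n : ℕ) : n = 0 ↔ ∀ i, n.testBit i = false :=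
  ⟨by rintro rfl; simp, Nat.zero_of_testBit_eq_false⟩

private lemma aux_add_eq_lor_of_land_eq_zero (a b : ℕ) (h : a &&& b = 0) :
    a + b = a ||| b := by
  induction a using Nat.binaryRec generalizing b with
  | zero => simp
  | bit c a ih =>
    cases b using Nat.bitCasesOn with
    | bit d b =>
      rw [Nat.land_bit, Nat.bit_eq_zero_iff] at h
      obtain ⟨h1, hd⟩ := h
      rw [Nat.lor_bit, ← ih b h1, Nat.bit_val, Nat.bit_val, Nat.bit_val]
      clear ih
      cases c <;> cases d <;> simp_all <;> omega

private lemma aux_land_mod_two_pow (a b i : ℕ) (h : a &&& b = 0) :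
    a % 2 ^ i &&& b % 2 ^ i = 0 := by
  rw [aux_eq_zero_iff_testBit] at h ⊢
  intro j
  have := h j
  simp_all [Nat.testBit_land, Nat.testBit_mod_two_pow]

private lemma aux_lor_lt_two_pow {a b i : ℕ} (ha : a < 2 ^ i) (hb : b < 2 ^ i) :
    a ||| b < 2 ^ i := by
  have : (a ||| b) % 2 ^ i = a ||| b := by
    refine Nat.eq_of_testBit_eq fun j => ?_
    simp only [Nat.testBit_mod_two_pow, Nat.testBit_lor]
    rcases lt_or_ge j i with hj | hj
    · simp [hj]
    · have ha' := Nat.testBit_eq_false_of_lt (lt_of_lt_of_le ha (Nat.pow_le_pow_right (by norm_num) hj))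
      have hb' := Nat.testBit_eq_false_of_lt (lt_of_lt_of_le hb (Nat.pow_le_pow_right (by norm_num) hj))
      simp [ha', hb', Nat.not_lt.2 hj]
  rw [← this]
  exact Nat.mod_lt _ (Nat.pow_pos (by norm_num))

/-- No-carry criterion: `a &&& b = 0` iff adding `a` and `b` in binary produces no carries. -/
private lemma aux_land_eq_zero_iff_no_carry (a b : ℕ) :
    a &&& b = 0 ↔ ∀ i, a % 2 ^ i + b % 2 ^ i < 2 ^ i := by
  constructor
  · intro h i
    rw [aux_add_eq_lor_of_land_eq_zero _ _ (aux_land_mod_two_pow a b i h)]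
    exact aux_lor_lt_two_pow (Nat.mod_lt _ (by positivity)) (Nat.mod_lt _ (by positivity))
  · intro h
    by_contra hne
    obtain ⟨k, hk⟩ : ∃ k, (a &&& b).testBit k = true := by
      by_contra hk
      push_neg at hk
      exact hne (Nat.zero_of_testBit_eq_false (by simpa using hk))
    rw [Nat.testBit_land, Bool.and_eq_true] at hk
    have ha : 2 ^ k ≤ a % 2 ^ (k + 1) := by
      by_contra hlt
      have : (a % 2 ^ (k + 1)).testBit k = false :=
        Nat.testBit_eq_false_of_lt (Nat.not_le.mp hlt)
      rw [Nat.testBit_mod_two_pow] at this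
      simp [hk.1, Nat.lt_succ_self] at this
    have hb : 2 ^ k ≤ b % 2 ^ (k + 1) := by
      by_contra hlt
      have : (b % 2 ^ (k + 1)).testBit k = false :=
        Nat.testBit_eq_false_of_lt (Nat.not_le.mp hlt)
      rw [Nat.testBit_mod_two_pow] at this
      simp [hk.2, Nat.lt_succ_self] at this
    have := h (k + 1)
    rw [pow_succ] at this ha hb
    omega

/-- Kummer / Lucas at `p = 2`: `(a+b).choose a` is odd iff `a` and `b` are bitwise disjoint. -/
private lemma aux_odd_choose_add (a b : ℕ) : Odd ((a + b).choose a) ↔ a &&& b = 0 := by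
  have h2 : Nat.Prime 2 := Nat.prime_two
  set B := Nat.log 2 (b + a) + 1 with hB
  have hlog : Nat.log 2 (b + a) < B := Nat.lt_succ_self _
  have hmul := Nat.Prime.emultiplicity_choose' h2 hlog
  have hodd : Odd ((a + b).choose a) ↔ ¬ (2 ∣ (a + b).choose a) := by
    rw [← Nat.not_even_iff_odd, even_iff_two_dvd]
  rw [hodd, ← emultiplicity_eq_zero, add_comm a b, hmul]
  rw [aux_land_eq_zero_iff_no_carry]
  constructor
  · intro h
    rw [Nat.cast_eq_zero, Finset.card_eq_zero] at h
    intro i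
    rcases Nat.eq_zero_or_pos i with rfl | hi
    · simp [Nat.mod_one]
    by_contra hge
    push_neg at hge
    have hiB : i < B := by
      by_contra hIB
      push_neg at hIB
      have : b + a < 2 ^ i := by
        calc b + a < 2 ^ B := by
              have := Nat.lt_pow_succ_log_self (by norm_num : 1 < 2) (b + a)
              simpa [hB] using this
          _ ≤ 2 ^ i := Nat.pow_le_pow_right (by norm_num) hIB
      have hha : a % 2 ^ i ≤ a := Nat.mod_le _ _
      have hhb : b % 2 ^ i ≤ b := Nat.mod_le _ _
      omega
    have : i ∈ Finset.filter (fun i => 2 ^ i ≤ a % 2 ^ i + b % 2 ^ i) (Finset.Ico 1 B) := by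
      simp only [Finset.mem_filter, Finset.mem_Ico]
      exact ⟨⟨hi, hiB⟩, hge⟩
    rw [h] at this
    exact Finset.notMem_empty _ this
  · intro h
    rw [Nat.cast_eq_zero, Finset.card_eq_zero, Finset.filter_eq_empty_iff]
    intro i _
    exact Nat.not_le.mpr (h i)

private lemma aux_land_lor_eq_zero (a x y : ℕ) :
    a &&& (x ||| y) = 0 ↔ a &&& x = 0 ∧ a &&& y = 0 := by
  simp only [aux_eq_zero_iff_testBit, Nat.testBit_land, Nat.testBit_lor]
  constructor
  · intro h
    constructor <;> intro i <;> have := h i <;>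
      cases ha : a.testBit i <;> cases hx : x.testBit i <;> cases hy : y.testBit i <;> simp_all
  · rintro ⟨h1, h2⟩ i
    have := h1 i; have := h2 i
    cases ha : a.testBit i <;> cases hx : x.testBit i <;> cases hy : y.testBit i <;> simp_all

private lemma aux_land_sum {ι : Type*} (s : Finset ι) (f : ι → ℕ)
    (hp : ∀ i ∈ s, ∀ j ∈ s, i ≠ j → f i &&& f j = 0) :
    ∀ a : ℕ, a &&& (∑ i ∈ s, f i) = 0 ↔ ∀ i ∈ s, a &&& f i = 0 := by
  induction s using Finset.cons_induction with
  | empty => simp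
  | cons j s hj ih =>
    intro a
    have hp' : ∀ i ∈ s, ∀ k ∈ s, i ≠ k → f i &&& f k = 0 := fun i hi k hk hik =>
      hp i (Finset.mem_cons_of_mem hi) k (Finset.mem_cons_of_mem hk) hik
    have hjs : f j &&& (∑ i ∈ s, f i) = 0 := by
      rw [ih hp' (f j)]
      intro i hi
      exact hp j (Finset.mem_cons_self _ _) i (Finset.mem_cons_of_mem hi)
        (fun h => hj (h ▸ hi))
    rw [Finset.sum_cons, aux_add_eq_lor_of_land_eq_zero _ _ hjs, aux_land_lor_eq_zero,
      ih hp' a]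
    constructor
    · rintro ⟨h1, h2⟩ i hi
      rcases Finset.mem_cons.mp hi with rfl | hi
      · exact h1
      · exact h2 i hi
    · intro h
      exact ⟨h j (Finset.mem_cons_self _ _), fun i hi => h i (Finset.mem_cons_of_mem hi)⟩

/-- The multinomial coefficient `(∑ i in S, f i)! / ∏ i in S, (f i)!` is odd if and only if
the values `f i`, `i ∈ S`, are pairwise bitwise disjoint in binary
(this is the criterion for the coefficient `β_{R,S,X}` in Milnor's multiplication formula
for the mod 2 Steenrod algebra to be nonzero). -/
theorem multinomial_odd_iff_pairwise_land_eq_zero {ι : Type*} (S : Finset ι) (f : ι → ℕ) :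
    Odd (Nat.multinomial S f) ↔
      ∀ i ∈ S, ∀ j ∈ S, i ≠ j → Nat.land (f i) (f j) = 0 := by
  show Odd (Nat.multinomial S f) ↔ ∀ i ∈ S, ∀ j ∈ S, i ≠ j → f i &&& f j = 0
  induction S using Finset.cons_induction with
  | empty => simp
  | cons a s ha ih =>
    rw [Nat.multinomial_cons, Nat.odd_mul, ih, aux_odd_choose_add]
    constructor
    · rintro ⟨h1, h2⟩ i hi j hj hij
      have hs : ∀ i ∈ s, f a &&& f i = 0 := (aux_land_sum s f h2 (f a)).mp h1
      rcases Finset.mem_cons.mp hi with hi' | hi' <;> rcases Finset.mem_cons.mp hj with hj' | hj'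
      · exact absurd (hi'.trans hj'.symm) hij
      · rw [hi']; exact hs j hj'
      · rw [hj', Nat.land_comm]; exact hs i hi'
      · exact h2 i hi' j hj' hij
    · intro h
      have h2 : ∀ i ∈ s, ∀ j ∈ s, i ≠ j → f i &&& f j = 0 := fun i hi j hj hij =>
        h i (Finset.mem_cons_of_mem hi) j (Finset.mem_cons_of_mem hj) hij
      refine ⟨(aux_land_sum s f h2 (f a)).mpr fun i hi => ?_, h2⟩
      exact h a (Finset.mem_cons_self _ _) i (Finset.mem_cons_of_mem hi)
        (fun hh => ha (hh ▸ hi))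
end

section
/- Let p : ℕ → ℕ be a profile function satisfying p(i) − j ≥ p(i+j) (truncated subtraction) for all i ≥ 1 and j ≥ 1, and let x be a Milnor matrix that is B-trivial for p, with row sums r_i and diagonal sums t_k. Then for every k ≥ 1 one has t_k ≡ r_k + x(0,k) (mod 2^{p(k)}). (This is the key congruence showing that B-trivial matrices compute the induced multiplication on the signature components E_R A; the hypothesis on p holds, e.g., for the profile p(i) = max(n+2−i, 0) of the subalgebra A(n) of the mod 2 Steenrod algebra.) -/
/-- The row sums `r_i = ∑_{j ≥ 0} 2^j · x (i, j)` of a finitely supported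
matrix `x : ℕ × ℕ →₀ ℕ`. -/
def milnorRowSum (x : ℕ × ℕ →₀ ℕ) (i : ℕ) : ℕ :=
  x.sum fun ij v => if ij.1 = i then 2 ^ ij.2 * v else 0

/-- The diagonal sums `t_k = ∑_{i + j = k} x (i, j)` of a finitely supported
matrix `x : ℕ × ℕ →₀ ℕ`. -/
def milnorDiagSum (x : ℕ × ℕ →₀ ℕ) (k : ℕ) : ℕ :=
  x.sum fun ij v => if ij.1 + ij.2 = k then v else 0

/-- A Milnor matrix (a finitely supported `x : ℕ × ℕ → ℕ` with `x (0,0) = 0`) is `B`-trivial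
for a profile function `p : ℕ → ℕ` if `2 ^ (p i - j) ∣ x (i, j)` whenever `i ≥ 1` and
`1 ≤ j ≤ p i`. -/
def IsBTrivial (p : ℕ → ℕ) (x : ℕ × ℕ →₀ ℕ) : Prop :=
  ∀ i j : ℕ, 1 ≤ i → 1 ≤ j → j ≤ p i → 2 ^ (p i - j) ∣ x (i, j)


private lemma sum_modEq_aux {α : Type*} {s : Finset α} {f g : α → ℕ} {n : ℕ}
    (h : ∀ a ∈ s, f a ≡ g a [MOD n]) : ∑ a ∈ s, f a ≡ ∑ a ∈ s, g a [MOD n] := by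
  induction s using Finset.cons_induction with
  | empty => rfl
  | cons a s ha ih =>
    simp only [Finset.sum_cons]
    exact (h a (Finset.mem_cons_self a s)).add
      (ih fun b hb => h b (Finset.mem_cons_of_mem hb))

/-- Let `p` be a profile function satisfying `p i - j ≥ p (i + j)` (truncated subtraction)
for all `i, j ≥ 1`, and let `x` be a `B`-trivial Milnor matrix for `p`.  Then for every
`k ≥ 1` the diagonal sum satisfies `t_k ≡ r_k + x (0, k) (mod 2 ^ (p k))`. -/
theorem diagSum_modCast_of_isBTrivial (p : ℕ → ℕ)
    (hp : ∀ i j : ℕ, 1 ≤ i → 1 ≤ j → p i - j ≥ p (i + j))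
    (x : ℕ × ℕ →₀ ℕ) (hx0 : x (0, 0) = 0) (htriv : IsBTrivial p x)
    (k : ℕ) (hk : 1 ≤ k) :
    milnorDiagSum x k ≡ milnorRowSum x k + x (0, k) [MOD 2 ^ p k] := by
  classical
  have hxk : x (0, k) = ∑ ij ∈ x.support, (if ij = (0, k) then x ij else 0) := by
    rw [Finset.sum_ite_eq' x.support (0, k) (fun ij => x ij)]
    split_ifs with h
    · rfl
    · exact Finsupp.notMem_support_iff.mp h
  unfold milnorDiagSum milnorRowSum
  rw [Finsupp.sum, Finsupp.sum, hxk, ← Finset.sum_add_distrib]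
  apply sum_modEq_aux
  rintro ⟨i, j⟩ _
  dsimp only
  by_cases hi : i = k
  · have hne : ((i, j) : ℕ × ℕ) ≠ (0, k) := by
      subst hi
      intro h; exact absurd (congrArg Prod.fst h) (by simpa using Nat.one_le_iff_ne_zero.mp hk)
    rw [if_neg hne, add_zero, if_pos hi]
    subst hi
    by_cases hj : j = 0
    · subst hj; simp [Nat.ModEq.refl]
    · rw [if_neg (by omega)]
      refine (Nat.modEq_zero_iff_dvd.mpr ?_).symm
      by_cases hle : j ≤ p i
      · obtain ⟨c, hc⟩ := htriv i j hk (Nat.one_le_iff_ne_zero.mpr hj) hle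
        refine ⟨c, ?_⟩
        rw [hc, ← mul_assoc, ← pow_add]
        congr 2
        omega
      · exact dvd_mul_of_dvd_left (pow_dvd_pow 2 (by omega)) _
  · rw [if_neg hi]
    by_cases hd : i + j = k
    · rw [if_pos hd]
      by_cases hi0 : i = 0
      · subst hi0
        simp only [zero_add] at hd
        subst hd
        simp [Nat.ModEq.refl]
      · have hj1 : 1 ≤ j := by omega
        have hne : ((i, j) : ℕ × ℕ) ≠ (0, k) := by
          intro h; exact hi0 (congrArg Prod.fst h)
        rw [if_neg hne, add_zero]
        refine Nat.modEq_zero_iff_dvd.mpr ?_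
        have hpk : p k ≤ p i - j := by
          have h2 := hp i j (Nat.one_le_iff_ne_zero.mpr hi0) hj1
          rw [hd] at h2
          omega
        by_cases hle : j ≤ p i
        · exact dvd_trans (pow_dvd_pow 2 hpk)
            (htriv i j (Nat.one_le_iff_ne_zero.mpr hi0) hj1 hle)
        · have : p k = 0 := by omega
          simp [this]
    · rw [if_neg hd, if_neg (by rintro ⟨rfl, rfl⟩; omega), add_zero]
end

section
/- Let p : ℕ → ℕ be a profile function and let x be a Milnor matrix that is B-trivial for p and has disjoint diagonals, with row sums r_i and diagonal sums t_k. Then for every k ≥ 1 the binary digits of r_k mod 2^{p(k)} form a subset of the binary digits of t_k mod 2^{p(k)}, i.e. Nat.land (r_k % 2^{p(k)}) (t_k % 2^{p(k)}) = r_k % 2^{p(k)}. (This is the assertion that multiplication by a B-trivial matrix with odd coefficient can only add non-zero bits to the B-signature, so it cannot lower the signature.) -/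
/-- A Milnor matrix has disjoint diagonals if for every `k` the entries `x (i, j)` with
`i + j = k` are pairwise bitwise disjoint. -/
def HasDisjointDiagonals (x : ℕ × ℕ →₀ ℕ) : Prop :=
  ∀ i j i' j' : ℕ, i + j = i' + j' → (i, j) ≠ (i', j') →
    Nat.land (x (i, j)) (x (i', j')) = 0

theorem aux_add_eq_lor : ∀ a b : ℕ, a &&& b = 0 → a + b = a ||| b := by
  intro a
  induction a using Nat.strong_induction_on with
  | _ a ih =>
    intro b h
    rcases Nat.eq_zero_or_pos a with rfl | ha
    · simp
    · have h2 : a / 2 &&& b / 2 = 0 := by rw [← Nat.and_div_two, h]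
      have ihr := ih (a / 2) (Nat.div_lt_self ha one_lt_two) (b / 2) h2
      have hA := Nat.div_add_mod a 2
      have hB := Nat.div_add_mod b 2
      have hO := Nat.div_add_mod (a ||| b) 2
      have hdiv : (a ||| b) / 2 = a / 2 ||| b / 2 := Nat.or_div_two
      have h0 : (a &&& b) % 2 = 0 := by rw [h]
      have hm1 : (a &&& b) % 2 = 1 ↔ a % 2 = 1 ∧ b % 2 = 1 := Nat.and_mod_two_eq_one
      have hm2 : (a ||| b) % 2 = 1 ↔ a % 2 = 1 ∨ b % 2 = 1 := Nat.or_mod_two_eq_one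
      have l1 : a % 2 < 2 := Nat.mod_lt _ (by norm_num)
      have l2 : b % 2 < 2 := Nat.mod_lt _ (by norm_num)
      have l3 : (a ||| b) % 2 < 2 := Nat.mod_lt _ (by norm_num)
      omega

theorem aux_land_sum_s3 {α : Type*} [DecidableEq α] (f : α → ℕ) :
    ∀ s : Finset α, (∀ b ∈ s, ∀ c ∈ s, b ≠ c → f b &&& f c = 0) →
    ∀ a : ℕ, (∀ b ∈ s, a &&& f b = 0) → a &&& (∑ b ∈ s, f b) = 0 := by
  intro s
  induction s using Finset.induction_on with
  | empty => intro _ a _; simp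
  | @insert c t hc ih =>
    intro hpair a ha
    rw [Finset.sum_insert hc]
    have hpair' : ∀ b ∈ t, ∀ d ∈ t, b ≠ d → f b &&& f d = 0 := fun b hb d hd =>
      hpair b (Finset.mem_insert_of_mem hb) d (Finset.mem_insert_of_mem hd)
    have hS : a &&& (∑ b ∈ t, f b) = 0 :=
      ih hpair' a (fun b hb => ha b (Finset.mem_insert_of_mem hb))
    have hcS : f c &&& (∑ b ∈ t, f b) = 0 :=
      ih hpair' (f c) (fun b hb =>
        hpair c (Finset.mem_insert_self c t) b (Finset.mem_insert_of_mem hb)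
          (by rintro rfl; exact hc hb))
    have hac : a &&& f c = 0 := ha c (Finset.mem_insert_self c t)
    rw [aux_add_eq_lor _ _ hcS, Nat.and_or_distrib_left, hS, hac]
    simp


/-- If the Milnor matrix `x` is `B`-trivial for the profile function `p` and has disjoint
diagonals, then for every `k ≥ 1` the binary digits of `r_k mod 2 ^ (p k)` form a subset of
the binary digits of `t_k mod 2 ^ (p k)`:  multiplication with a `B`-trivial matrix can only
add non-zero bits to the `B`-signature. -/
theorem land_rowSum_diagSum_of_isBTrivial (p : ℕ → ℕ) (x : ℕ × ℕ →₀ ℕ)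
    (hx0 : x (0, 0) = 0) (htriv : IsBTrivial p x) (hdisj : HasDisjointDiagonals x)
    (k : ℕ) (hk : 1 ≤ k) :
    Nat.land (milnorRowSum x k % 2 ^ p k) (milnorDiagSum x k % 2 ^ p k)
      = milnorRowSum x k % 2 ^ p k := by
  set M := 2 ^ p k with hM
  -- Step 1: row sum mod M equals x (k,0) mod M
  have hr : milnorRowSum x k % M = x (k, 0) % M := by
    rw [milnorRowSum, Finsupp.sum, Finset.sum_nat_mod]
    have hcongr : ∀ ij ∈ x.support,
        ((if ij.1 = k then 2 ^ ij.2 * x ij else 0) % M)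
          = (if ij = (k, 0) then x (k, 0) % M else 0) := by
      rintro ⟨i, j⟩ _
      by_cases h1 : i = k
      · subst h1
        rcases Nat.eq_zero_or_pos j with rfl | hj
        · simp
        · have hdvd : M ∣ 2 ^ j * x (i, j) := by
            rcases le_or_gt j (p i) with hle | hlt
            · obtain ⟨c, hc⟩ := htriv i j hk hj hle
              refine ⟨c, ?_⟩
              rw [hc, hM, ← mul_assoc, ← pow_add]
              congr 2
              omega
            · refine ⟨2 ^ (j - p i) * x (i, j), ?_⟩
              rw [hM, ← mul_assoc, ← pow_add]
              congr 2
              omega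
          obtain ⟨c, hc⟩ := hdvd
          have hne : (i, j) ≠ (i, 0) := by simp; omega
          simp [hne, hc, Nat.mul_mod_right]
      · have hne : (i, j) ≠ (k, 0) := by simp [h1]
        simp [h1, hne]
    rw [Finset.sum_congr rfl hcongr, Finset.sum_ite_eq' x.support (k, 0)]
    by_cases hmem : (k, 0) ∈ x.support
    · simp [hmem, Nat.mod_mod_of_dvd]
    · have : x (k, 0) = 0 := Finsupp.notMem_support_iff.mp hmem
      simp [hmem, this]
  -- Step 2: diagonal sum decomposition
  set g : ℕ × ℕ → ℕ := fun ij => if ij.1 + ij.2 = k then x ij else 0 with hg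
  set rest := ∑ ij ∈ x.support.erase (k, 0), g ij with hrest
  have hdS : milnorDiagSum x k = ∑ ij ∈ x.support, g ij := by
    rw [milnorDiagSum, Finsupp.sum]
  have hgk0 : g (k, 0) = x (k, 0) := by simp [hg]
  have ht : milnorDiagSum x k = x (k, 0) + rest := by
    rw [hdS]
    by_cases hmem : (k, 0) ∈ x.support
    · rw [← Finset.add_sum_erase x.support g hmem, hgk0]
    · have hx : x (k, 0) = 0 := Finsupp.notMem_support_iff.mp hmem
      rw [hrest, Finset.erase_eq_of_notMem hmem, hx, zero_add]
  have hpair : ∀ b ∈ x.support.erase (k, 0), ∀ c ∈ x.support.erase (k, 0),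
      b ≠ c → g b &&& g c = 0 := by
    rintro ⟨i, j⟩ _ ⟨i', j'⟩ _ hne
    by_cases h1 : i + j = k
    · by_cases h2 : i' + j' = k
      · simpa [hg, h1, h2] using hdisj i j i' j' (by omega) hne
      · simp [hg, h2]
    · simp [hg, h1]
  have hel : ∀ b ∈ x.support.erase (k, 0), x (k, 0) &&& g b = 0 := by
    rintro ⟨i, j⟩ hb
    by_cases h1 : i + j = k
    · have hne : ((k : ℕ), (0 : ℕ)) ≠ (i, j) := (Finset.ne_of_mem_erase hb).symm
      simpa [hg, h1] using hdisj k 0 i j (by omega) hne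
    · simp [hg, h1]
  have hdisj0 : x (k, 0) &&& rest = 0 :=
    aux_land_sum_s3 g (x.support.erase (k, 0)) hpair (x (k, 0)) hel
  -- Conclude
  rw [hr, ht, aux_add_eq_lor _ _ hdisj0, hM]
  show (x (k, 0) % 2 ^ p k) &&& ((x (k, 0) ||| rest) % 2 ^ p k) = x (k, 0) % 2 ^ p k
  apply Nat.eq_of_testBit_eq
  intro n
  simp only [Nat.testBit_land, Nat.testBit_mod_two_pow, Nat.testBit_lor]
  cases h1 : (x (k, 0)).testBit n <;> simp [h1]
end

section
/- Let p : ℕ → ℕ be a finitely supported profile function satisfying p(i+j) ≥ p(i) − j (truncated subtraction) for all i, j ≥ 1. Fix a linear order ⊑ on the set of bit positions {(s,t) ∈ ℕ × ℕ : t ≥ 1, s < p(t)} such that (s,t) ⊏ (s',t') whenever t < t', and order signatures by the induced lexicographic order: for finitely supported R, R' : ℕ → ℕ, set sig(R) < sig(R') if at the ⊑-greatest bit position (s,t) where the s-th binary digit of R(t) mod 2^{p(t)} and of R'(t) mod 2^{p(t)} differ, the digit of R'(t) mod 2^{p(t)} equals 1. Then: if a Milnor matrix x has disjoint diagonals and is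 not B-trivial for p, its row-sum sequence R = (r_i) and diagonal-sum sequence T = (t_k) satisfy sig(R) < sig(T). (This is the statement that all non-B-trivial terms in Milnor's product formula with odd coefficient have strictly larger B-signature.) -/
private theorem land0_bit {a b : ℕ} (h : a &&& b = 0) (i : ℕ)
    (ha : Nat.testBit a i = true) : Nat.testBit b i = false := by
  have hx := congrArg (fun n => Nat.testBit n i) h
  simpa [Nat.testBit_land, ha] using hx

private theorem low_parity {a b : ℕ} (h : a &&& b = 0) : a % 2 = 0 ∨ b % 2 = 0 := by
  have hx : (Nat.testBit a 0 && Nat.testBit b 0) = false := by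
    rw [← Nat.testBit_land, h, Nat.zero_testBit]
  simp only [Nat.testBit_zero, Bool.and_eq_false_iff, decide_eq_false_iff_not] at hx
  omega

private theorem testBit_add_of_land_eq_zero {a b : ℕ} (h : a &&& b = 0) (i : ℕ) :
    Nat.testBit (a + b) i = (Nat.testBit a i || Nat.testBit b i) := by
  induction i generalizing a b with
  | zero =>
    have h0 := low_parity h
    simp only [Nat.testBit_zero]
    rcases h0 with h0 | h0 <;> rcases Nat.mod_two_eq_zero_or_one a with ha | ha <;>
      rcases Nat.mod_two_eq_zero_or_one b with hb | hb <;>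
      simp_all [Nat.add_mod]
  | succ i ih =>
    have h0 := low_parity h
    have hdiv : (a + b) / 2 = a / 2 + b / 2 := by omega
    have hland : a / 2 &&& b / 2 = 0 := by
      apply Nat.zero_of_testBit_eq_false
      intro j
      rw [Nat.testBit_land, Nat.testBit_div_two, Nat.testBit_div_two, ← Nat.testBit_land, h,
        Nat.zero_testBit]
    rw [Nat.testBit_add_one, hdiv, ih hland, Nat.testBit_add_one (i := i),
      Nat.testBit_add_one (i := i)]

private theorem testBit_finset_sum {α : Type*} (s : Finset α) (f : α → ℕ)
    (h : ∀ a ∈ s, ∀ b ∈ s, a ≠ b → f a &&& f b = 0) :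
    ∀ n, (Nat.testBit (∑ a ∈ s, f a) n = true ↔ ∃ a ∈ s, Nat.testBit (f a) n = true) := by
  induction s using Finset.cons_induction with
  | empty => simp
  | cons a t ha ih =>
    have ht : ∀ b ∈ t, ∀ c ∈ t, b ≠ c → f b &&& f c = 0 := fun b hb c hc =>
      h b (Finset.mem_cons_of_mem hb) c (Finset.mem_cons_of_mem hc)
    have hd : f a &&& (∑ b ∈ t, f b) = 0 := by
      apply Nat.zero_of_testBit_eq_false
      intro j
      rw [Nat.testBit_land]
      rcases hfa : Nat.testBit (f a) j with _ | _
      · simp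
      · rcases hfs : Nat.testBit (∑ b ∈ t, f b) j with _ | _
        · simp
        · obtain ⟨b, hb, hfb⟩ := (ih ht j).mp hfs
          have := land0_bit (h a (Finset.mem_cons_self a t) b
            (Finset.mem_cons_of_mem hb) (fun he => ha (he ▸ hb))) j hfa
          rw [this] at hfb
          exact absurd hfb (by simp)
    intro n
    rw [Finset.sum_cons, testBit_add_of_land_eq_zero hd, Bool.or_eq_true, ih ht]
    constructor
    · rintro (hx | ⟨b, hb, hx⟩)
      · exact ⟨a, Finset.mem_cons_self a t, hx⟩
      · exact ⟨b, Finset.mem_cons_of_mem hb, hx⟩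
    · rintro ⟨b, hb, hx⟩
      rcases Finset.mem_cons.mp hb with rfl | hb
      · exact Or.inl hx
      · exact Or.inr ⟨b, hb, hx⟩

private theorem dvd_of_low_bits {m v : ℕ} (h : ∀ s, s < m → Nat.testBit v s = false) :
    2 ^ m ∣ v := by
  rw [Nat.dvd_iff_mod_eq_zero]
  apply Nat.zero_of_testBit_eq_false
  intro i
  rw [Nat.testBit_mod_two_pow]
  rcases Nat.lt_or_ge i m with hi | hi
  · simp [h i hi]
  · simp [Nat.not_lt_of_ge hi]

private theorem exists_bad_bit {m v : ℕ} (h : ¬ 2 ^ m ∣ v) :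
    ∃ s, s < m ∧ Nat.testBit v s = true := by
  by_contra hc
  push_neg at hc
  exact h (dvd_of_low_bits (fun s hs => by
    rcases hb : Nat.testBit v s with _ | _
    · rfl
    · exact absurd hb (by simpa using hc s hs)))

private theorem exists_ord_max {σ : Type*} (r : LinearOrder σ) (s : Finset σ)
    (h : s.Nonempty) : ∃ m ∈ s, ∀ a, r.lt m a → a ∉ s := by
  letI := r
  refine ⟨s.max' h, s.max'_mem h, fun a hlt hmem => ?_⟩
  exact absurd (s.le_max' a hmem) (not_le_of_gt hlt)

private theorem diag_testBit (x : ℕ × ℕ →₀ ℕ) (hdisj : HasDisjointDiagonals x)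
    {k s i j : ℕ} (hij : i + j = k) (hbit : Nat.testBit (x (i, j)) s = true) :
    Nat.testBit (milnorDiagSum x k) s = true := by
  have hmem : (i, j) ∈ x.support := by
    rw [Finsupp.mem_support_iff]
    intro h0
    rw [h0] at hbit
    simp at hbit
  have hsum : milnorDiagSum x k
      = ∑ ij ∈ x.support, (if ij.1 + ij.2 = k then x ij else 0) := rfl
  have hpair : ∀ a ∈ x.support, ∀ b ∈ x.support, a ≠ b →
      (if a.1 + a.2 = k then x a else 0) &&& (if b.1 + b.2 = k then x b else 0) = 0 := by
    rintro ⟨a1, a2⟩ _ ⟨b1, b2⟩ _ hab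
    by_cases hak : a1 + a2 = k
    · by_cases hbk : b1 + b2 = k
      · simp only [hak, hbk, if_true]
        exact hdisj a1 a2 b1 b2 (hak.trans hbk.symm) hab
      · simp [hbk]
    · simp [hak]
  rw [hsum, testBit_finset_sum _ _ hpair s]
  exact ⟨(i, j), hmem, by simpa [hij] using hbit⟩

private theorem row_mod (x : ℕ × ℕ →₀ ℕ) (t m : ℕ)
    (htriv : ∀ j, 1 ≤ j → j ≤ m → 2 ^ (m - j) ∣ x (t, j)) :
    milnorRowSum x t % 2 ^ m = x (t, 0) % 2 ^ m := by
  classical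
  set F : ℕ × ℕ → ℕ := fun ij => if ij.1 = t then 2 ^ ij.2 * x ij else 0 with hF
  have hsum : milnorRowSum x t = ∑ ij ∈ x.support, F ij := rfl
  have hkey : ∀ ij ∈ x.support.erase (t, 0), 2 ^ m ∣ F ij := by
    rintro ⟨i, j⟩ hij
    obtain ⟨hne, _⟩ := Finset.mem_erase.mp hij
    by_cases h1 : i = t
    · subst h1
      have hj : 1 ≤ j := by
        rcases Nat.eq_zero_or_pos j with rfl | h
        · exact absurd rfl hne
        · exact h
      simp only [hF, if_pos rfl]
      rcases le_or_gt m j with hmj | hjm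
      · exact dvd_mul_of_dvd_left (pow_dvd_pow 2 hmj) _
      · have h2 : (2 : ℕ) ^ m = 2 ^ j * 2 ^ (m - j) := by
          rw [← pow_add]
          congr 1
          omega
        rw [h2]
        exact mul_dvd_mul_left _ (htriv j hj (Nat.le_of_lt hjm))
    · simp [hF, h1]
  have hdvd : 2 ^ m ∣ ∑ ij ∈ x.support.erase (t, 0), F ij := Finset.dvd_sum hkey
  have hsplit : ∑ ij ∈ x.support, F ij
      = F (t, 0) + ∑ ij ∈ x.support.erase (t, 0), F ij := by
    by_cases hmem : (t, 0) ∈ x.support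
    · exact (Finset.add_sum_erase _ F hmem).symm
    · rw [Finset.erase_eq_of_notMem hmem]
      have : F (t, 0) = 0 := by
        simp [hF, Finsupp.notMem_support_iff.mp hmem]
      rw [this, zero_add]
  have hF0 : F (t, 0) = x (t, 0) := by simp [hF]
  obtain ⟨c, hc⟩ := hdvd
  rw [hsum, hsplit, hF0, hc, Nat.add_mul_mod_self_left]

/-- Let `p` be a finitely supported profile function with `p (i + j) ≥ p i - j` for
`i, j ≥ 1`, and fix a linear order `ord` on the set of bit positions
`{(s, t) : 1 ≤ t, s < p t}` such that `(s, t) < (s', t')` whenever `t < t'`.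
If a Milnor matrix `x` has disjoint diagonals and is not `B`-trivial for `p`, then its
row-sum sequence `R` is strictly smaller than its diagonal-sum sequence `T` in the induced
lexicographic order of `B`-signatures: at the greatest bit position where the binary digits of
`R t mod 2 ^ (p t)` and `T t mod 2 ^ (p t)` differ, the digit of `T t mod 2 ^ (p t)` is `1`
(and that of `R t mod 2 ^ (p t)` is `0`). -/
theorem signature_lt_of_not_isBTrivial (p : ℕ → ℕ) (hpfin : (Function.support p).Finite)
    (hp : ∀ i j : ℕ, 1 ≤ i → 1 ≤ j → p (i + j) ≥ p i - j)
    (ord : LinearOrder {st : ℕ × ℕ // 1 ≤ st.2 ∧ st.1 < p st.2})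
    (hord : ∀ a b : {st : ℕ × ℕ // 1 ≤ st.2 ∧ st.1 < p st.2},
      a.1.2 < b.1.2 → ord.lt a b)
    (x : ℕ × ℕ →₀ ℕ) (hx0 : x (0, 0) = 0)
    (hdisj : HasDisjointDiagonals x) (hnt : ¬ IsBTrivial p x) :
    ∃ st : {st : ℕ × ℕ // 1 ≤ st.2 ∧ st.1 < p st.2},
      Nat.testBit (milnorRowSum x st.1.2 % 2 ^ p st.1.2) st.1.1 = false ∧
      Nat.testBit (milnorDiagSum x st.1.2 % 2 ^ p st.1.2) st.1.1 = true ∧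
      ∀ st' : {st : ℕ × ℕ // 1 ≤ st.2 ∧ st.1 < p st.2}, ord.lt st st' →
        Nat.testBit (milnorRowSum x st'.1.2 % 2 ^ p st'.1.2) st'.1.1 =
          Nat.testBit (milnorDiagSum x st'.1.2 % 2 ^ p st'.1.2) st'.1.1 := by
  classical
  -- the type of bit positions is finite
  have hsetfin : {st : ℕ × ℕ | 1 ≤ st.2 ∧ st.1 < p st.2}.Finite := by
    apply Set.Finite.subset (Finset.finite_toSet
      (hpfin.toFinset.biUnion fun t => (Finset.range (p t)).image fun s => (s, t)))
    rintro ⟨s, t⟩ ⟨ht, hs⟩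
    have hs' : s < p t := hs
    simp only [Finset.coe_biUnion, Set.mem_iUnion, Finset.mem_coe, Finset.mem_biUnion,
      Finset.mem_image, Finset.mem_range, Set.Finite.mem_toFinset, Function.mem_support]
    exact ⟨t, by omega, s, hs', rfl⟩
  haveI hfin : Finite {st : ℕ × ℕ // 1 ≤ st.2 ∧ st.1 < p st.2} := hsetfin.to_subtype
  -- the finset of "bad bit" positions
  set BadSet : Set {st : ℕ × ℕ // 1 ≤ st.2 ∧ st.1 < p st.2} :=
    {st | ∃ i j, 1 ≤ i ∧ 1 ≤ j ∧ i + j = st.1.2 ∧ st.1.1 < p i - j ∧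
      Nat.testBit (x (i, j)) st.1.1 = true} with hBadSet
  have hBadmem : ∀ a, a ∈ (Set.toFinite BadSet).toFinset ↔ a ∈ BadSet :=
    fun a => (Set.toFinite BadSet).mem_toFinset
  -- the bad set is nonempty
  unfold IsBTrivial at hnt
  push_neg at hnt
  obtain ⟨i₀, j₀, hi₀, hj₀, hj₀p, hndvd⟩ := hnt
  obtain ⟨s₀, hs₀, hbit₀⟩ := exists_bad_bit hndvd
  have hst₀ : (⟨(s₀, i₀ + j₀), ⟨show 1 ≤ i₀ + j₀ by omega,
      show s₀ < p (i₀ + j₀) by have := hp i₀ j₀ hi₀ hj₀; omega⟩⟩ :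
      {st : ℕ × ℕ // 1 ≤ st.2 ∧ st.1 < p st.2}) ∈ (Set.toFinite BadSet).toFinset :=
    (hBadmem _).mpr ⟨i₀, j₀, hi₀, hj₀, rfl, hs₀, hbit₀⟩
  -- K : the greatest bad position
  obtain ⟨K, hK, hKmax⟩ := exists_ord_max ord (Set.toFinite BadSet).toFinset ⟨_, hst₀⟩
  obtain ⟨i₁, j₁, hi₁, hj₁, hij₁, hs₁, hbit₁⟩ := (hBadmem _).mp hK
  -- every row at or above K's diagonal index has no bad bits
  have hrows : ∀ t' j s, K.1.2 ≤ t' → 1 ≤ j → s < p t' - j →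
      Nat.testBit (x (t', j)) s = false := by
    intro t' j s hkt hj hs
    rcases hb : Nat.testBit (x (t', j)) s with _ | _
    · rfl
    · exfalso
      have h1t : 1 ≤ t' := le_trans K.2.1 hkt
      have hsp : s < p (t' + j) := lt_of_lt_of_le hs (hp t' j h1t hj)
      refine hKmax ⟨(s, t' + j), ⟨show 1 ≤ t' + j by omega, hsp⟩⟩
        (hord _ _ (show (K.1).2 < t' + j by omega)) ?_
      exact (hBadmem _).mpr ⟨t', j, h1t, hj, rfl, hs, hb⟩
  -- hence above K's diagonal index the row sums reduce to the `j = 0` entry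
  have hA : ∀ t' s', K.1.2 ≤ t' → s' < p t' →
      Nat.testBit (milnorRowSum x t' % 2 ^ p t') s' = Nat.testBit (x (t', 0)) s' := by
    intro t' s' hkt hs'
    rw [row_mod x t' (p t') (fun j hj _ =>
      dvd_of_low_bits (fun s hsj => hrows t' j s hkt hj hsj))]
    rw [Nat.testBit_mod_two_pow]
    simp [hs']
  have hB : ∀ t' s' i j, i + j = t' → s' < p t' → Nat.testBit (x (i, j)) s' = true →
      Nat.testBit (milnorDiagSum x t' % 2 ^ p t') s' = true := by
    intro t' s' i j hij hs' hbit
    rw [Nat.testBit_mod_two_pow]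
    simp [hs', diag_testBit x hdisj hij hbit]
  -- the set of positions where the two signatures differ
  set DSet : Set {st : ℕ × ℕ // 1 ≤ st.2 ∧ st.1 < p st.2} :=
    {st | Nat.testBit (milnorRowSum x st.1.2 % 2 ^ p st.1.2) st.1.1 ≠
      Nat.testBit (milnorDiagSum x st.1.2 % 2 ^ p st.1.2) st.1.1} with hDSet
  have hDmem : ∀ a, a ∈ (Set.toFinite DSet).toFinset ↔ a ∈ DSet :=
    fun a => (Set.toFinite DSet).mem_toFinset
  have hKD : K ∈ (Set.toFinite DSet).toFinset := by
    refine (hDmem _).mpr ?_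
    have hT : Nat.testBit (milnorDiagSum x K.1.2 % 2 ^ p K.1.2) K.1.1 = true :=
      hB K.1.2 K.1.1 i₁ j₁ hij₁ K.2.2 hbit₁
    have hd : Nat.land (x (i₁, j₁)) (x (K.1.2, 0)) = 0 :=
      hdisj i₁ j₁ K.1.2 0 (by omega)
        (by intro h; injection h with h1 h2; omega)
    have hR : Nat.testBit (milnorRowSum x K.1.2 % 2 ^ p K.1.2) K.1.1 = false := by
      rw [hA K.1.2 K.1.1 le_rfl K.2.2]
      exact land0_bit hd K.1.1 hbit₁
    simp only [hDSet, Set.mem_setOf_eq]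
    rw [hR, hT]
    exact Bool.false_ne_true
  obtain ⟨M, hMD, hMmax⟩ := exists_ord_max ord (Set.toFinite DSet).toFinset ⟨K, hKD⟩
  have hkM : K.1.2 ≤ M.1.2 := by
    by_contra hlt
    exact hMmax K (hord M K (by omega)) hKD
  have hDM : Nat.testBit (milnorRowSum x M.1.2 % 2 ^ p M.1.2) M.1.1 ≠
      Nat.testBit (milnorDiagSum x M.1.2 % 2 ^ p M.1.2) M.1.1 := (hDmem _).mp hMD
  have hRM := hA M.1.2 M.1.1 hkM M.2.2
  have hRfalse : Nat.testBit (milnorRowSum x M.1.2 % 2 ^ p M.1.2) M.1.1 = false := by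
    rcases hb : Nat.testBit (x (M.1.2, 0)) M.1.1 with _ | _
    · rw [hRM, hb]
    · exfalso
      have hT := hB M.1.2 M.1.1 M.1.2 0 (by omega) M.2.2 hb
      exact hDM ((hRM.trans hb).trans hT.symm)
  have hTtrue : Nat.testBit (milnorDiagSum x M.1.2 % 2 ^ p M.1.2) M.1.1 = true := by
    rcases hT : Nat.testBit (milnorDiagSum x M.1.2 % 2 ^ p M.1.2) M.1.1 with _ | _
    · exact absurd (hRfalse.trans hT.symm) hDM
    · rfl
  refine ⟨M, hRfalse, hTtrue, fun st' hlt => ?_⟩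
  have hnotD := hMmax st' hlt
  by_contra hne
  exact hnotD ((hDmem _).mpr hne)
end
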